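/- Equal allocation coefficients as expected membership: in a world W with ties, if a top-k answer set is chosen uniformly at random among all valid top-k answer sets of W (sets of size min(k,|W|) containing all tuples strictly better than some member and, among tying tuples at the boundary, any choice), then the probability that t is in the chosen set equals α(t, W) = min(1, (k−a)/b) when a < k (with a, b as before), and 0 otherwise. -/

import Mathlib

open Finset

private lemma exists_topset {α : Type*} [DecidableEq α] (W : Finset α) (s : α → ℝ) :
    ∀ m, m ≤ W.card → ∃ S, S ⊆ W ∧ S.card = m ∧ ∀ t1 ∈ S, ∀ t2 ∈ W \ S, s t2 ≤ s t1 := by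
  intro m
  induction m with
  | zero => intro _; exact ⟨∅, empty_subset _, card_empty, by simp⟩
  | succ n ih =>
    intro h
    obtain ⟨S, hSW, hcard, hval⟩ := ih (Nat.le_of_succ_le h)
    have hne : (W \ S).Nonempty := by
      rw [← card_pos, card_sdiff_of_subset hSW]; omega
    obtain ⟨x, hx, hmax⟩ := exists_max_image (W \ S) s hne
    refine ⟨insert x S, insert_subset (mem_sdiff.1 hx).1 hSW, ?_, ?_⟩
    · rw [card_insert_of_notMem (fun hxS => (mem_sdiff.1 hx).2 hxS), hcard]
    · intro t1 ht1 t2 ht2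
      have ht2' : t2 ∈ W \ S :=
        sdiff_subset_sdiff (le_refl W) (subset_insert x S) ht2
      rcases mem_insert.1 ht1 with h1 | h1
      · exact h1 ▸ hmax t2 ht2'
      · exact hval t1 h1 t2 ht2'

/-- Equal allocation coefficients as expected membership: if a top-k answer set
of a world `W` is chosen uniformly at random among all valid top-k answer sets
(subsets `S ⊆ W` of size `min(k,|W|)` such that every excluded tuple scores no
higher than every included tuple), then the probability that `t ∈ W` is in the
chosen set equals `min(1, (k-a)/b)` when `a < k` and `0` otherwise, where `a`
counts the tuples of `W` strictly better than `t` and `b` the tuples tying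
with `t` (including `t`). -/
theorem equal_allocation_uniform_membership {α : Type*} [DecidableEq α]
    (W : Finset α) (s : α → ℝ) (k : ℕ) (t : α) (ht : t ∈ W) :
    (((W.powerset.filter (fun S => S.card = min k W.card ∧
          ∀ t1 ∈ S, ∀ t2 ∈ W \ S, s t2 ≤ s t1)).filter (fun S => t ∈ S)).card : ℝ) /
      ((W.powerset.filter (fun S => S.card = min k W.card ∧
          ∀ t1 ∈ S, ∀ t2 ∈ W \ S, s t2 ≤ s t1)).card : ℝ)
    = if (W.filter (fun t' => s t < s t')).card < k
      then min 1 (((k : ℝ) - (W.filter (fun t' => s t < s t')).card) /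
          (W.filter (fun t' => s t' = s t)).card)
      else 0 := by
  classical
  set A := W.filter (fun t' => s t < s t') with hA
  set B := W.filter (fun t' => s t' = s t) with hB
  set F := W.powerset.filter (fun S => S.card = min k W.card ∧
      ∀ t1 ∈ S, ∀ t2 ∈ W \ S, s t2 ≤ s t1) with hF
  have hmemF : ∀ S : Finset α, S ∈ F ↔ S ⊆ W ∧ S.card = min k W.card ∧
      ∀ t1 ∈ S, ∀ t2 ∈ W \ S, s t2 ≤ s t1 := by
    intro S; simp [hF, mem_filter, mem_powerset, and_assoc]
  have htB : t ∈ B := mem_filter.2 ⟨ht, rfl⟩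
  have hb0 : 0 < B.card := card_pos.2 ⟨t, htB⟩
  have htA : t ∉ A := by
    simp [hA]
  have hAB : Disjoint A B := by
    rw [disjoint_left]
    intro x hxA hxB
    have h1 : s t < s x := (mem_filter.1 hxA).2
    have h2 : s x = s t := (mem_filter.1 hxB).2
    exact absurd h2 (ne_of_gt h1)
  have hABW : A ∪ B ⊆ W := union_subset (filter_subset _ _) (filter_subset _ _)
  have hab : A.card + B.card ≤ W.card := by
    rw [← card_union_of_disjoint hAB]
    exact card_le_card hABW
  -- any element of W with score ≥ s t lies in A ∪ B
  have hmemAB : ∀ x ∈ W, s t ≤ s x → x ∈ A ∪ B := by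
    intro x hx hle
    rcases eq_or_lt_of_le hle with h | h
    · exact mem_union_right _ (mem_filter.2 ⟨hx, h.symm⟩)
    · exact mem_union_left _ (mem_filter.2 ⟨hx, h⟩)
  -- A is contained in any valid S that either is larger than A or contains t
  have hAsub : ∀ S ∈ F, (A.card < S.card ∨ t ∈ S) → A ⊆ S := by
    intro S hS hor x hxA
    obtain ⟨hSW, hcard, hval⟩ := (hmemF S).1 hS
    by_contra hxS
    have hxWS : x ∈ W \ S := mem_sdiff.2 ⟨(filter_subset _ _) hxA, hxS⟩
    have hxst : s t < s x := (mem_filter.1 hxA).2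
    rcases hor with hlt | htS
    · have hSsub : S ⊆ A.erase x := by
        intro y hyS
        refine mem_erase.2 ⟨fun h => hxS (h ▸ hyS), ?_⟩
        exact mem_filter.2 ⟨hSW hyS, lt_of_lt_of_le hxst (hval y hyS x hxWS)⟩
      have := card_le_card hSsub
      rw [card_erase_of_mem hxA] at this
      omega
    · exact absurd (hval t htS x hxWS) (not_le.2 hxst)
  by_cases hak : A.card < k
  · rw [if_pos hak]
    by_cases h2 : k ≤ A.card + B.card
    · -- boundary case: m = k, valid sets are A ∪ T for T ⊆ B of size k - a
      have hkW : k ≤ W.card := le_trans h2 hab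
      have hm : min k W.card = k := min_eq_left hkW
      have hFval : F = (B.powersetCard (k - A.card)).image (fun T => A ∪ T) := by
        ext S
        rw [hmemF, mem_image]
        constructor
        · rintro ⟨hSW, hcard, hval⟩
          rw [hm] at hcard
          have hAS : A ⊆ S := hAsub S ((hmemF S).2 ⟨hSW, by rw [hm]; exact hcard, hval⟩)
            (Or.inl (by omega))
          have hSAB : S ⊆ A ∪ B := by
            by_contra hc
            obtain ⟨x, hxS, hxAB⟩ := not_subset.1 hc
            have hxW : x ∈ W := hSW hxS
            have hxlt : s x < s t := by
              by_contra hge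
              exact hxAB (hmemAB x hxW (le_of_not_gt hge))
            have hABS : A ∪ B ⊆ S := by
              intro y hy
              by_contra hyS
              have hyWS : y ∈ W \ S := mem_sdiff.2 ⟨hABW hy, hyS⟩
              have h3 : s y ≤ s x := hval x hxS y hyWS
              have h4 : s t ≤ s y := by
                rcases mem_union.1 hy with h | h
                · exact le_of_lt (mem_filter.1 h).2
                · exact le_of_eq (mem_filter.1 h).2.symm
              linarith
            have hins : insert x (A ∪ B) ⊆ S := insert_subset hxS hABS
            have := card_le_card hins
            rw [card_insert_of_notMem hxAB, card_union_of_disjoint hAB] at this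
            omega
          refine ⟨S \ A, ?_, ?_⟩
          · rw [mem_powersetCard]
            refine ⟨?_, ?_⟩
            · intro y hy
              rcases mem_sdiff.1 hy with ⟨hyS, hyA⟩
              rcases mem_union.1 (hSAB hyS) with h | h
              · exact absurd h hyA
              · exact h
            · rw [card_sdiff_of_subset hAS, hcard]
          · exact union_sdiff_of_subset hAS
        · rintro ⟨T, hT, rfl⟩
          rw [mem_powersetCard] at hT
          obtain ⟨hTB, hTcard⟩ := hT
          have hdisj : Disjoint A T := disjoint_of_subset_right hTB hAB
          have hcardU : (A ∪ T).card = k := by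
            rw [card_union_of_disjoint hdisj, hTcard]; omega
          refine ⟨union_subset (filter_subset _ _) (le_trans hTB (filter_subset _ _)),
            by rw [hm]; exact hcardU, ?_⟩
          intro t1 ht1 t2 ht2
          have h1 : s t ≤ s t1 := by
            rcases mem_union.1 ht1 with h | h
            · exact le_of_lt (mem_filter.1 h).2
            · exact le_of_eq (mem_filter.1 (hTB h)).2.symm
          have h2' : s t2 ≤ s t := by
            by_contra hgt
            have : t2 ∈ A := mem_filter.2 ⟨(mem_sdiff.1 ht2).1, lt_of_not_ge hgt⟩
            exact (mem_sdiff.1 ht2).2 (mem_union_left _ this)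
          linarith
      have hinj : Set.InjOn (fun T => A ∪ T) (B.powersetCard (k - A.card)) := by
        intro T1 h1 T2 h2' heq
        have d1 : Disjoint A T1 :=
          disjoint_of_subset_right (mem_powersetCard.1 h1).1 hAB
        have d2 : Disjoint A T2 :=
          disjoint_of_subset_right (mem_powersetCard.1 h2').1 hAB
        have e1 : (A ∪ T1) \ A = T1 := union_sdiff_cancel_left d1
        have e2 : (A ∪ T2) \ A = T2 := union_sdiff_cancel_left d2
        rw [← e1, ← e2]
        simp only at heq
        rw [heq]
      have hFcard : F.card = B.card.choose (k - A.card) := by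
        rw [hFval, card_image_of_injOn hinj, card_powersetCard]
      -- the numerator
      have hnum : F.filter (fun S => t ∈ S)
          = (((B.erase t).powersetCard (k - A.card - 1)).image (fun T => insert t T)).image
              (fun T => A ∪ T) := by
        rw [hFval, filter_image]
        congr 1
        ext T
        simp only [mem_filter, mem_image, mem_powersetCard]
        constructor
        · rintro ⟨⟨hTB, hTcard⟩, htT⟩
          have htT' : t ∈ T := by
            rcases mem_union.1 htT with h | h
            · exact absurd h htA
            · exact h
          refine ⟨T.erase t, ⟨erase_subset_erase t hTB, ?_⟩, insert_erase htT'⟩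
          rw [card_erase_of_mem htT', hTcard]
        · rintro ⟨T', ⟨hT'B, hT'card⟩, rfl⟩
          have htT' : t ∉ T' := fun h => (mem_erase.1 (hT'B h)).1 rfl
          refine ⟨⟨insert_subset htB (le_trans hT'B (erase_subset t B)), ?_⟩,
            mem_union_right _ (mem_insert_self t T')⟩
          rw [card_insert_of_notMem htT', hT'card]
          omega
      have hinj2 : Set.InjOn (fun T => insert t T)
          (((B.erase t).powersetCard (k - A.card - 1) : Finset (Finset α)) : Set (Finset α)) := by
        intro T1 h1 T2 h2' heq
        have e1 : t ∉ T1 := fun h => (mem_erase.1 ((mem_powersetCard.1 h1).1 h)).1 rfl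
        have e2 : t ∉ T2 := fun h => (mem_erase.1 ((mem_powersetCard.1 h2').1 h)).1 rfl
        rw [← erase_insert e1, ← erase_insert e2]
        simp only at heq
        rw [heq]
      have hIsub : ((B.erase t).powersetCard (k - A.card - 1)).image (fun T => insert t T)
          ⊆ B.powersetCard (k - A.card) := by
        intro T hT
        obtain ⟨T', hT', rfl⟩ := mem_image.1 hT
        rw [mem_powersetCard] at hT' ⊢
        have htT' : t ∉ T' := fun h => (mem_erase.1 (hT'.1 h)).1 rfl
        refine ⟨insert_subset htB (le_trans hT'.1 (erase_subset t B)), ?_⟩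
        rw [card_insert_of_notMem htT', hT'.2]
        omega
      have hnumcard : (F.filter (fun S => t ∈ S)).card
          = (B.card - 1).choose (k - A.card - 1) := by
        rw [hnum, card_image_of_injOn (Set.InjOn.mono (by exact_mod_cast hIsub) hinj),
          card_image_of_injOn hinj2, card_powersetCard, card_erase_of_mem htB]
      rw [hnumcard, hFcard]
      -- arithmetic: choose ratio equals (k - a)/b
      have hka : k - A.card ≤ B.card := by omega
      have hchoosepos : 0 < B.card.choose (k - A.card) := Nat.choose_pos hka
      have hident : B.card * (B.card - 1).choose (k - A.card - 1)
          = B.card.choose (k - A.card) * (k - A.card) := by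
        have := Nat.add_one_mul_choose_eq (B.card - 1) (k - A.card - 1)
        have e1 : B.card - 1 + 1 = B.card := by omega
        have e2 : k - A.card - 1 + 1 = k - A.card := by omega
        rw [e1, e2] at this
        exact this
      have hbR : (0:ℝ) < B.card := by exact_mod_cast hb0
      have hmin : min 1 (((k:ℝ) - A.card) / B.card) = ((k:ℝ) - A.card) / B.card := by
        refine min_eq_right ?_
        rw [div_le_one hbR]
        have : (k:ℝ) ≤ (A.card:ℝ) + B.card := by exact_mod_cast h2
        linarith
      rw [hmin]
      rw [div_eq_div_iff (by exact_mod_cast hchoosepos.ne') (ne_of_gt hbR)]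
      have hcast : ((k:ℝ) - A.card) = ((k - A.card : ℕ) : ℝ) := by
        rw [Nat.cast_sub (le_of_lt hak)]
      rw [hcast]
      have h' : (B.card - 1).choose (k - A.card - 1) * B.card
          = (k - A.card) * B.card.choose (k - A.card) := by
        rw [mul_comm, hident, mul_comm]
      exact_mod_cast h'
    · -- everyone in A ∪ B is in every valid set; probability 1
      push_neg at h2
      have hFt : F.filter (fun S => t ∈ S) = F := by
        refine filter_true_of_mem ?_
        intro S hS
        obtain ⟨hSW, hcard, hval⟩ := (hmemF S).1 hS
        rcases le_or_gt k W.card with hkW | hkW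
        · have hm : min k W.card = k := min_eq_left hkW
          rw [hm] at hcard
          by_contra htS
          have hyWS : t ∈ W \ S := mem_sdiff.2 ⟨ht, htS⟩
          have hSsub : S ⊆ (A ∪ B).erase t := by
            intro y hyS
            have h3 : s t ≤ s y := hval y hyS t hyWS
            exact mem_erase.2 ⟨fun h => htS (h ▸ hyS), hmemAB y (hSW hyS) h3⟩
          have := card_le_card hSsub
          rw [card_erase_of_mem (mem_union_right _ htB), card_union_of_disjoint hAB] at this
          omega
        · have hm : min k W.card = W.card := min_eq_right (le_of_lt hkW)
          rw [hm] at hcard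
          have : S = W := eq_of_subset_of_card_le hSW (le_of_eq hcard.symm)
          rw [this]; exact ht
      have hFne : F.Nonempty := by
        obtain ⟨S, hSW, hcard, hval⟩ :=
          exists_topset W s (min k W.card) (min_le_right _ _)
        exact ⟨S, (hmemF S).2 ⟨hSW, hcard, hval⟩⟩
      have hFc : (0:ℝ) < F.card := by exact_mod_cast card_pos.2 hFne
      rw [hFt, div_self (ne_of_gt hFc)]
      have hbR : (0:ℝ) < B.card := by exact_mod_cast hb0
      refine (min_eq_left ?_).symm
      rw [le_div_iff₀ hbR]
      have : (A.card:ℝ) + B.card < k := by exact_mod_cast h2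
      linarith
  · -- a ≥ k: t is in no valid answer set
    rw [if_neg hak]
    have hempty : F.filter (fun S => t ∈ S) = ∅ := by
      rw [filter_eq_empty_iff]
      intro S hS htS
      obtain ⟨hSW, hcard, hval⟩ := (hmemF S).1 hS
      have hAS : A ⊆ S := hAsub S hS (Or.inr htS)
      have hins : insert t A ⊆ S := insert_subset htS hAS
      have h1 := card_le_card hins
      rw [card_insert_of_notMem htA] at h1
      have h3 : min k W.card ≤ k := min_le_left _ _
      omega
    rw [hempty]
    simp
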